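/- Let A be a subset of a tree T with at least two elements such that A has a greatest lower bound. Then there exist elements a₁, a₂ ∈ A such that the greatest lower bound of {a₁, a₂} equals the greatest lower bound of A. -/

import Mathlib

/-- A tree: a partial order in which the set of strict predecessors of every
element is well-ordered. -/
def IsTree (α : Type*) [PartialOrder α] : Prop :=
  ∀ t : α, IsWellOrder {s : α // s < t} (fun a b => (a : α) < b)

theorem stmt_3 {α : Type*} [PartialOrder α] (htree : IsTree α)
    (A : Set α) (htwo : ∃ a ∈ A, ∃ b ∈ A, a ≠ b)
    (g : α) (hg : IsGLB A g) :
    ∃ a₁ ∈ A, ∃ a₂ ∈ A, IsGLB {a₁, a₂} g := by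
  obtain ⟨a, ha, b, hb, hab⟩ := htwo
  by_cases hgA : g ∈ A
  · refine ⟨g, hgA, a, ha, ?_, fun x hx => hx (Set.mem_insert _ _)⟩
    intro y hy
    rcases hy with rfl | hy
    · exact le_rfl
    · simp only [Set.mem_singleton_iff] at hy
      exact hy ▸ hg.1 ha
  · by_contra hcon
    push_neg at hcon
    have hga : g < a := lt_of_le_of_ne (hg.1 ha) (fun e => hgA (e ▸ ha))
    -- comparability in the chain below a
    have comp : ∀ x : α, x ≤ a → ¬ x ≤ g → g < x := by
      intro x hxa hxg
      rcases eq_or_lt_of_le hxa with rfl | hlt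
      · exact hga
      · rcases @trichotomous _ _ (htree a).toTrichotomous ⟨x, hlt⟩ ⟨g, hga⟩ with
          h1 | h2 | h3
        · exact absurd (le_of_lt h1) hxg
        · exact absurd (le_of_eq (congrArg Subtype.val h2)) hxg
        · exact h3
    have key : ∀ b' ∈ A, ∃ x, x ≤ a ∧ x ≤ b' ∧ g < x := by
      intro b' hb'
      have hnot := hcon a ha b' hb'
      have hlb : g ∈ lowerBounds {a, b'} := by
        intro y hy
        rcases hy with rfl | hy
        · exact hg.1 ha
        · simp only [Set.mem_singleton_iff] at hy
          exact hy ▸ hg.1 hb'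
      have : ¬ g ∈ upperBounds (lowerBounds {a, b'}) := fun h => hnot ⟨hlb, h⟩
      simp only [upperBounds, Set.mem_setOf_eq] at this
      push_neg at this
      obtain ⟨x, hx, hxg⟩ := this
      have hxa : x ≤ a := hx (Set.mem_insert _ _)
      have hxb : x ≤ b' := hx (Set.mem_insert_of_mem _ rfl)
      exact ⟨x, hxa, hxb, comp x hxa hxg⟩
    choose! f hf1 hf2 hf3 using key
    by_cases hall : ∀ b' ∈ A, f b' = a
    · have : a ∈ lowerBounds A := fun b' hb' => (hall b' hb') ▸ hf2 b' hb'
      exact absurd (hg.2 this) (not_le_of_gt hga)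
    · push_neg at hall
      obtain ⟨b₀, hb₀, hfb₀⟩ := hall
      have hfb₀lt : f b₀ < a := lt_of_le_of_ne (hf1 b₀ hb₀) hfb₀
      set Y : Set {s : α // s < a} := {s | ∃ b' ∈ A, f b' = ↑s} with hY
      have hYne : Y.Nonempty := ⟨⟨f b₀, hfb₀lt⟩, b₀, hb₀, rfl⟩
      have wf := (htree a).toIsWellFounded.wf
      set m := wf.min Y hYne with hm
      obtain ⟨bm, hbm, hfbm⟩ := wf.min_mem Y hYne
      have hgm : g < (m : α) := hfbm ▸ hf3 bm hbm
      have hmlb : (m : α) ∈ lowerBounds A := by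
        intro b' hb'
        rcases eq_or_lt_of_le (hf1 b' hb') with heq | hlt
        · have : (m : α) < a := m.2
          exact le_trans (le_of_lt (heq ▸ this)) (hf2 b' hb')
        · have hmem : (⟨f b', hlt⟩ : {s : α // s < a}) ∈ Y := ⟨b', hb', rfl⟩
          have hnlt := wf.not_lt_min Y hmem
          have : (m : α) ≤ f b' := by
            rcases @trichotomous _ _ (htree a).toTrichotomous m ⟨f b', hlt⟩ with
              h1 | h2 | h3
            · exact le_of_lt h1
            · exact le_of_eq (congrArg Subtype.val h2)
            · exact absurd h3 hnlt
          exact le_trans this (hf2 b' hb')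
      exact absurd (hg.2 hmlb) (not_le_of_gt hgm)
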